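/- Let S_ε solve dS_ε/dt(t,x) = μ_S Δ_ε S_ε(t,x) - c_ε(t,x) S_ε(t,x) on the periodic grid, where the coefficient satisfies 0 ≤ c_ε(t,x) ≤ β̄ for all t, x, and S_ε(0,x) ≥ c > 0 for all x. Then for all t ≥ 0 and all grid points x, S_ε(t,x) ≥ c e^{-β̄ t}. In particular, for every T > 0 there is c_T = c e^{-β̄ T} > 0, independent of ε, with S_ε(t,x) ≥ c_T for all 0 ≤ t ≤ T and all x. -/

import Mathlib

noncomputable section
open Real Set

/-- Discrete Laplacian `Δ_ε f (x) = ε⁻²(f(x+ε) - 2f(x) + f(x-ε))` with `ε = 1/n`,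
on the periodic grid `D_ε` modelled as `ZMod n`. -/
def dlap (n : ℕ) (f : ZMod n → ℝ) (x : ZMod n) : ℝ :=
    ((n : ℝ)⁻¹ ^ 2)⁻¹ * (f (x + 1) - 2 * f x + f (x - 1))

/-- If `S_ε` solves `dS_ε/dt = μ_S Δ_ε S_ε - c_ε S_ε` with `0 ≤ c_ε ≤ β̄` and
`S_ε(0,·) ≥ c > 0`, then `S_ε(t,x) ≥ c e^{-β̄ t}` for all `t ≥ 0` and all grid points,
independently of `ε`. -/
theorem stmt9 (n : ℕ) [NeZero n] (μS βbar c : ℝ)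
    (hμ : 0 < μS) (hβbar : 0 ≤ βbar) (hc : 0 < c)
    (S : ℝ → ZMod n → ℝ) (cf : ℝ → ZMod n → ℝ)
    (hcf0 : ∀ t x, 0 ≤ cf t x) (hcfb : ∀ t x, cf t x ≤ βbar)
    (hS0 : ∀ x, c ≤ S 0 x)
    (hode : ∀ t : ℝ, 0 ≤ t → ∀ x, HasDerivAt (fun s => S s x)
      (μS * dlap n (S t) x - cf t x * S t x) t) :
    ∀ t : ℝ, 0 ≤ t → ∀ x, c * Real.exp (-βbar * t) ≤ S t x := by
  -- Transformed solution `S̄(t,x) = e^{β̄ t} S(t,x)`.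
  set Sb : ℝ → ZMod n → ℝ := fun s y => Real.exp (βbar * s) * S s y with hSbdef
  -- its time derivative
  set D : ℝ → ZMod n → ℝ :=
    fun s y => μS * dlap n (fun z => Sb s z) y + (βbar - cf s y) * Sb s y with hDdef
  have hSb : ∀ t : ℝ, 0 ≤ t → ∀ x, HasDerivAt (fun s => Sb s x) (D t x) t := by
    intro t ht x
    have h1 : HasDerivAt (fun s : ℝ => Real.exp (βbar * s)) (βbar * Real.exp (βbar * t)) t := by
      simpa [mul_comm] using ((hasDerivAt_id t).const_mul βbar).exp
    have h2 := h1.fun_mul (hode t ht x)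
    refine h2.congr_deriv ?_
    simp only [hDdef, hSbdef, dlap]
    ring
  -- the minimum over the grid
  have hne : (Finset.univ : Finset (ZMod n)).Nonempty := Finset.univ_nonempty
  set m : ℝ → ℝ := fun s => Finset.univ.inf' hne (fun y => Sb s y) with hmdef
  have hm_le : ∀ s x, m s ≤ Sb s x := fun s x => Finset.inf'_le _ (Finset.mem_univ x)
  have hA : ∀ s : ℝ, (Finset.univ.filter (fun y => Sb s y = m s)).Nonempty := by
    intro s
    obtain ⟨y, -, hy⟩ := Finset.exists_mem_eq_inf' hne (fun y => Sb s y)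
    exact ⟨y, Finset.mem_filter.2 ⟨Finset.mem_univ _, hy.symm⟩⟩
  set f' : ℝ → ℝ := fun s =>
    (Finset.univ.filter (fun y => Sb s y = m s)).sup' (hA s) (fun y => -(D s y)) with hf'def
  -- key estimate with barrier
  have key : ∀ δ : ℝ, 0 < δ → ∀ b : ℝ, ∀ t ∈ Icc (0:ℝ) b,
      -(m t) ≤ δ * Real.exp ((βbar + 1) * t) - c := by
    intro δ hδ b t htb
    have hcontm : ContinuousOn (fun s => -(m s)) (Icc 0 b) := by
      intro s hs
      have : ContinuousAt (fun u => m u) s := by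
        apply ContinuousAt.finset_inf'_apply hne
        intro y _
        exact (hSb s hs.1 y).continuousAt
      exact this.neg.continuousWithinAt
    have hB : ∀ s : ℝ, HasDerivAt (fun u => δ * Real.exp ((βbar + 1) * u) - c)
        (δ * ((βbar + 1) * Real.exp ((βbar + 1) * s))) s := by
      intro s
      have h1 : HasDerivAt (fun u : ℝ => Real.exp ((βbar + 1) * u))
          ((βbar + 1) * Real.exp ((βbar + 1) * s)) s := by
        simpa [mul_comm] using ((hasDerivAt_id s).const_mul (βbar + 1)).exp
      exact (h1.const_mul δ).sub_const c
    have ha : -(m 0) ≤ δ * Real.exp ((βbar + 1) * 0) - c := by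
      have : c ≤ m 0 := by
        apply Finset.le_inf'
        intro y _
        simpa [hSbdef] using hS0 y
      simp only [mul_zero, Real.exp_zero, mul_one]
      linarith
    have hf' : ∀ s ∈ Ico (0:ℝ) b, ∀ r, f' s < r →
        ∃ᶠ z in nhdsWithin s (Ioi s), slope (fun u => -(m u)) s z < r := by
      intro s hs r hr
      have hev : ∀ᶠ z in nhdsWithin s (Ioi s), ∀ x : ZMod n, m s - r * (z - s) < Sb z x := by
        rw [Filter.eventually_all]
        intro x
        by_cases hx : Sb s x = m s
        · -- active point: use the derivative
          have hxA : x ∈ Finset.univ.filter (fun y => Sb s y = m s) :=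
            Finset.mem_filter.2 ⟨Finset.mem_univ _, hx⟩
          have hDx : -(D s x) < r :=
            lt_of_le_of_lt (Finset.le_sup' (fun y => -(D s y)) hxA) hr
          have hD : -r < D s x := by linarith
          have hslope : Filter.Tendsto (slope (fun u => Sb u x) s)
              (nhdsWithin s {s}ᶜ) (nhds (D s x)) :=
            hasDerivAt_iff_tendsto_slope.1 (hSb s hs.1 x)
          have hev1 : ∀ᶠ z in nhdsWithin s {s}ᶜ, -r < slope (fun u => Sb u x) s z :=
            hslope.eventually (eventually_gt_nhds hD)
          have hev2 : ∀ᶠ z in nhdsWithin s (Ioi s), -r < slope (fun u => Sb u x) s z :=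
            hev1.filter_mono (nhdsWithin_mono s (fun z hz => ne_of_gt hz))
          filter_upwards [hev2, self_mem_nhdsWithin] with z hz hz'
          have hzs : (0:ℝ) < z - s := sub_pos.2 hz'
          rw [slope_def_field] at hz
          have : -r * (z - s) < Sb z x - Sb s x := by
            have := (lt_div_iff₀ hzs).1 hz
            linarith
          rw [hx] at this
          linarith
        · -- inactive point: use continuity
          have hlt : m s < Sb s x := lt_of_le_of_ne (hm_le s x) (Ne.symm hx)
          have hcont : Filter.Tendsto (fun z => Sb z x + r * (z - s)) (nhds s)
              (nhds (Sb s x + r * (s - s))) := by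
            exact ((hSb s hs.1 x).continuousAt.tendsto).add
              (by exact (continuous_const.mul (continuous_id.sub continuous_const)).tendsto s)
          have hcont' : Filter.Tendsto (fun z => Sb z x + r * (z - s)) (nhds s)
              (nhds (Sb s x)) := by simpa using hcont
          have hev1 : ∀ᶠ z in nhds s, m s < Sb z x + r * (z - s) :=
            hcont'.eventually (eventually_gt_nhds hlt)
          have hev2 : ∀ᶠ z in nhdsWithin s (Ioi s), m s < Sb z x + r * (z - s) :=
            hev1.filter_mono nhdsWithin_le_nhds
          filter_upwards [hev2] with z hz
          linarith
      have hev' : ∀ᶠ z in nhdsWithin s (Ioi s), slope (fun u => -(m u)) s z < r := by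
        filter_upwards [hev, self_mem_nhdsWithin] with z hz hz'
        have hzs : (0:ℝ) < z - s := sub_pos.2 hz'
        have hmz : m s - r * (z - s) < m z := by
          rw [hmdef]
          rw [Finset.lt_inf'_iff]
          intro x _
          exact hz x
        rw [slope_def_field]
        rw [div_lt_iff₀ hzs]
        linarith
      exact hev'.frequently
    have bound : ∀ s ∈ Ico (0:ℝ) b, -(m s) = δ * Real.exp ((βbar + 1) * s) - c →
        f' s < δ * ((βbar + 1) * Real.exp ((βbar + 1) * s)) := by
      intro s hs hcontact
      rw [hf'def]
      rw [Finset.sup'_lt_iff]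
      intro y hy
      have hy' : Sb s y = m s := (Finset.mem_filter.1 hy).2
      have hms : m s = c - δ * Real.exp ((βbar + 1) * s) := by linarith
      have hE : (0:ℝ) < Real.exp ((βbar + 1) * s) := Real.exp_pos _
      -- discrete Laplacian is nonnegative at a minimum point
      have hL : 0 ≤ dlap n (fun z => Sb s z) y := by
        have h1 : Sb s y ≤ Sb s (y + 1) := hy' ▸ hm_le s (y + 1)
        have h2 : Sb s y ≤ Sb s (y - 1) := hy' ▸ hm_le s (y - 1)
        have h3 : (0:ℝ) ≤ (((n : ℝ)⁻¹ ^ 2))⁻¹ := by positivity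
        simp only [dlap]
        nlinarith
      have hcf1 := hcf0 s y
      have hcf2 := hcfb s y
      simp only [hDdef]
      have hSby : Sb s y = c - δ * Real.exp ((βbar + 1) * s) := by rw [hy', hms]
      rw [hSby]
      nlinarith [mul_nonneg (sub_nonneg.2 hcf2) hc.le, mul_nonneg (hcf0 s y) (mul_pos hδ hE).le,
        mul_nonneg hμ.le hL, mul_pos hδ hE]
    exact image_le_of_liminf_slope_right_lt_deriv_boundary hcontm hf' ha hB bound htb
  -- conclude: m t ≥ c for t ≥ 0
  intro t ht x
  have hmt : c ≤ m t := by
    by_contra h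
    push_neg at h
    have hE : (0:ℝ) < Real.exp ((βbar + 1) * t) := Real.exp_pos _
    set δ := (c - m t) / (2 * Real.exp ((βbar + 1) * t)) with hδdef
    have hδ : 0 < δ := by
      apply div_pos (by linarith) (by positivity)
    have := key δ hδ t t ⟨ht, le_refl t⟩
    have hδE : δ * Real.exp ((βbar + 1) * t) = (c - m t) / 2 := by
      rw [hδdef, div_mul_eq_mul_div, mul_div_mul_right _ _ hE.ne']
    rw [hδE] at this
    linarith
  have hfin : c ≤ Real.exp (βbar * t) * S t x := le_trans hmt (hm_le t x)
  have hE : (0:ℝ) < Real.exp (βbar * t) := Real.exp_pos _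
  have : c * Real.exp (-βbar * t) = c / Real.exp (βbar * t) := by
    rw [show -βbar * t = -(βbar * t) by ring, Real.exp_neg]
    ring
  rw [this, div_le_iff₀ hE]
  nlinarith
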